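/- In the ring A = Z_3[[a_1, b_1, a_2, b_2]]/(a_1 b_1 - 3, a_2 b_2 - 3), the prime ideal P generated by the images of a_1 and a_2 has height 1. -/

import Mathlib

/-! The ring `A = ℤ₃[[a₁, b₁, a₂, b₂]] / (a₁b₁ - 3, a₂b₂ - 3)`, where `ℤ₃ = ℤ_[3]` is the
ring of 3-adic integers: the completed local ring of the family of compactified jacobians
at the point `[I]`, `I = ν⁎𝒪(-2)`, in Kass's example. -/

/-- The formal power series ring `ℤ₃[[a₁, b₁, a₂, b₂]]` in four variables over the
3-adic integers. -/
abbrev B : Type := MvPowerSeries (Fin 4) ℤ_[3]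

/-- The ideal `(a₁b₁ - 3, a₂b₂ - 3)` of `ℤ₃[[a₁, b₁, a₂, b₂]]`, where `a₁, b₁, a₂, b₂`
are the four variables. -/
noncomputable abbrev relIdeal : Ideal B :=
  Ideal.span {MvPowerSeries.X 0 * MvPowerSeries.X 1 - 3,
    MvPowerSeries.X 2 * MvPowerSeries.X 3 - 3}

/-- The ring `A = ℤ₃[[a₁, b₁, a₂, b₂]] / (a₁b₁ - 3, a₂b₂ - 3)`. -/
abbrev A : Type := B ⧸ relIdeal

/-- The image `a₁` in `A` of the first variable. -/
noncomputable def a1 : A := Ideal.Quotient.mk relIdeal (MvPowerSeries.X 0)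

/-- The image `b₁` in `A` of the second variable. -/
noncomputable def b1 : A := Ideal.Quotient.mk relIdeal (MvPowerSeries.X 1)

/-- The image `a₂` in `A` of the third variable. -/
noncomputable def a2 : A := Ideal.Quotient.mk relIdeal (MvPowerSeries.X 2)

/-- The image `b₂` in `A` of the fourth variable. -/
noncomputable def b2 : A := Ideal.Quotient.mk relIdeal (MvPowerSeries.X 3)


/-! ### Auxiliary machinery -/


noncomputable section

/-- Geometric-type sum `∑ 3^a * u a` in `ℤ_[3]`. -/
def KG (u : ℕ → ℤ_[3]) : ℤ_[3] := ∑' a : ℕ, 3 ^ a * u a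

lemma KG_summable (u : ℕ → ℤ_[3]) : Summable (fun a : ℕ => (3:ℤ_[3]) ^ a * u a) := by
  have h3 : ‖(3:ℤ_[3])‖ = (3:ℝ)⁻¹ := by
    have : ((3:ℕ) : ℤ_[3]) = (3 : ℤ_[3]) := by push_cast; ring
    rw [← this]
    simpa using PadicInt.norm_p (p := 3)
  apply Summable.of_norm_bounded (g := fun a : ℕ => ((3:ℝ)⁻¹) ^ a)
    (summable_geometric_of_lt_one (by norm_num) (by norm_num))
  intro a
  calc ‖(3:ℤ_[3]) ^ a * u a‖ ≤ ‖(3:ℤ_[3]) ^ a‖ * ‖u a‖ := norm_mul_le _ _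
    _ ≤ ‖(3:ℤ_[3]) ^ a‖ * 1 := by
        exact mul_le_mul_of_nonneg_left (PadicInt.norm_le_one _) (norm_nonneg _)
    _ = ((3:ℝ)⁻¹) ^ a := by rw [mul_one, norm_pow, h3]

lemma KG_zero : KG (fun _ => 0) = 0 := by simp [KG]

lemma KG_add (u v : ℕ → ℤ_[3]) : KG (fun a => u a + v a) = KG u + KG v := by
  unfold KG
  rw [← Summable.tsum_add (KG_summable u) (KG_summable v)]
  congr 1; funext a; ring

lemma KG_neg (u : ℕ → ℤ_[3]) : KG (fun a => - u a) = - KG u := by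
  unfold KG
  rw [← tsum_neg]
  congr 1; funext a; ring

lemma KG_sub (u v : ℕ → ℤ_[3]) : KG (fun a => u a - v a) = KG u - KG v := by
  have := KG_add (fun a => u a - v a) v
  simp only [sub_add_cancel] at this
  rw [this]; ring

lemma KG_const_mul (c : ℤ_[3]) (u : ℕ → ℤ_[3]) :
    KG (fun a => c * u a) = c * KG u := by
  unfold KG
  rw [← Summable.tsum_mul_left c (KG_summable u)]
  congr 1; funext a; ring

lemma KG_shift (u : ℕ → ℤ_[3]) : KG u = u 0 + 3 * KG (fun a => u (a+1)) := by
  unfold KG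
  rw [Summable.tsum_eq_zero_add (KG_summable u)]
  simp only [pow_zero, one_mul]
  rw [← Summable.tsum_mul_left (3:ℤ_[3]) (KG_summable (fun a => u (a+1)))]
  congr 1
  apply tsum_congr; intro a; ring

lemma KG_head (u : ℕ → ℤ_[3]) (h : ∀ a, 1 ≤ a → u a = 0) : KG u = u 0 := by
  rw [KG_shift]
  have : (fun a => u (a+1)) = fun _ => (0:ℤ_[3]) := by
    funext a; exact h _ (by omega)
  rw [this, KG_zero, mul_zero, add_zero]

lemma KG_one (u : ℕ → ℤ_[3]) (h0 : u 0 = 0) (h : ∀ a, 2 ≤ a → u a = 0) :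
    KG u = 3 * u 1 := by
  rw [KG_shift, h0, zero_add]
  congr 1
  exact KG_head _ (fun a ha => h _ (by omega))

lemma KG_up (v : ℕ → ℤ_[3]) :
    KG (fun a => if a = 0 then 0 else v (a - 1)) = 3 * KG v := by
  rw [KG_shift]
  simp only [reduceIte, Nat.add_sub_cancel, zero_add]
  congr 1

lemma KG_dvd (k : ℕ) (u : ℕ → ℤ_[3]) (h : ∀ a, (3:ℤ_[3]) ^ (k - a) ∣ u a) :
    (3:ℤ_[3]) ^ k ∣ KG u := by
  induction k generalizing u with
  | zero => simp
  | succ k ih =>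
      rw [KG_shift]
      apply dvd_add
      · simpa using h 0
      · rw [pow_succ, mul_comm ((3:ℤ_[3])^k) 3]
        exact mul_dvd_mul_left 3 (ih _ (fun a => by simpa [Nat.succ_sub_succ] using h (a+1)))

end

noncomputable section
open MvPowerSeries

abbrev BB : Type := MvPowerSeries (Fin 4) ℤ_[3]

/-- exponent of `X i * X j`. -/
def KE (i j : Fin 4) : Fin 4 →₀ ℕ := Finsupp.single i 1 + Finsupp.single j 1

lemma KE_apply (i j k : Fin 4) :
    KE i j k = (if i = k then 1 else 0) + (if j = k then 1 else 0) := by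
  simp [KE, Finsupp.single_apply]

lemma KE_self₁ {i j : Fin 4} (hij : i ≠ j) : KE i j i = 1 := by
  rw [KE_apply, if_pos rfl, if_neg (Ne.symm hij)]

lemma KE_self₂ {i j : Fin 4} (hij : i ≠ j) : KE i j j = 1 := by
  rw [KE_apply, if_neg hij, if_pos rfl]


lemma KE_le_one {i j : Fin 4} (hij : i ≠ j) (k : Fin 4) : KE i j k ≤ 1 := by
  rw [KE_apply]
  rcases eq_or_ne i k with rfl | h1
  · rw [if_pos rfl, if_neg (by exact fun h => hij h.symm)]
  · rw [if_neg h1]; split <;> omega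

lemma X_mul_X (i j : Fin 4) :
    (MvPowerSeries.X i * MvPowerSeries.X j : BB) = monomial (KE i j) 1 := by
  rw [MvPowerSeries.X_def, MvPowerSeries.X_def, monomial_mul_monomial, one_mul, KE]

/-- quotient upon division of `f` by `X i X j - 3`. -/
def KQ (i j : Fin 4) (f : BB) : BB :=
  fun d => KG (fun a => f (d + (a+1) • KE i j))

/-- remainder upon division of `f` by `X i X j - 3`. -/
def KR (i j : Fin 4) (f : BB) : BB :=
  fun d => if d i = 0 ∨ d j = 0 then KG (fun a => f (d + a • KE i j)) else 0

lemma coeff_eq (f : BB) (d : Fin 4 →₀ ℕ) : MvPowerSeries.coeff d f = f d := rfl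

lemma KR_apply (i j : Fin 4) (f : BB) (d : Fin 4 →₀ ℕ) :
    KR i j f d = if d i = 0 ∨ d j = 0 then KG (fun a => f (d + a • KE i j)) else 0 := rfl

lemma KQ_apply (i j : Fin 4) (f : BB) (d : Fin 4 →₀ ℕ) :
    KQ i j f d = KG (fun a => f (d + (a+1) • KE i j)) := rfl

lemma KE_le_iff {i j : Fin 4} (hij : i ≠ j) (d : Fin 4 →₀ ℕ) :
    KE i j ≤ d ↔ 1 ≤ d i ∧ 1 ≤ d j := by
  rw [Finsupp.le_def]
  constructor
  · intro h
    exact ⟨(KE_self₁ hij) ▸ h i, (KE_self₂ hij) ▸ h j⟩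
  · rintro ⟨h1, h2⟩ k
    rcases eq_or_ne i k with rfl | hik
    · rw [KE_self₁ hij]; exact h1
    · rcases eq_or_ne j k with rfl | hjk
      · rw [KE_self₂ (hij)]; exact h2
      · rw [KE_apply, if_neg hik, if_neg hjk]; omega

lemma sub_KE_add (d : Fin 4 →₀ ℕ) {i j : Fin 4} (hij : i ≠ j) (h : KE i j ≤ d) (a : ℕ) :
    d - KE i j + (a + 1) • KE i j = d + a • KE i j := by
  rw [Finsupp.le_def] at h
  ext k
  have hdk := h k
  have hk1 := KE_le_one hij k
  simp only [Finsupp.add_apply, Finsupp.tsub_apply, Finsupp.smul_apply, smul_eq_mul]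
  rcases Nat.le_one_iff_eq_zero_or_eq_one.mp hk1 with h0 | h1
  · rw [h0]; omega
  · rw [h1]; omega

lemma add_sub_KE (d : Fin 4 →₀ ℕ) {i j : Fin 4} (hij : i ≠ j) (a : ℕ) (ha : 1 ≤ a) :
    d + a • KE i j - KE i j = d + (a-1) • KE i j := by
  ext k
  have hk1 := KE_le_one hij k
  simp only [Finsupp.add_apply, Finsupp.tsub_apply, Finsupp.smul_apply, smul_eq_mul]
  rcases Nat.le_one_iff_eq_zero_or_eq_one.mp hk1 with h0 | h1
  · rw [h0]; omega
  · rw [h1]; omega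

lemma three_eq_C : (3 : BB) = (MvPowerSeries.C 3 : BB) := by
  rw [map_ofNat]

lemma coeff_three_mul (f : BB) (d : Fin 4 →₀ ℕ) :
    MvPowerSeries.coeff d ((3:BB) * f) = 3 * f d := by
  rw [three_eq_C, MvPowerSeries.coeff_C_mul, coeff_eq]

lemma coeff_mul_XX (i j : Fin 4) (g : BB) (d : Fin 4 →₀ ℕ) :
    MvPowerSeries.coeff d (g * (MvPowerSeries.X i * MvPowerSeries.X j)) =
      if KE i j ≤ d then g (d - KE i j) else 0 := by
  rw [X_mul_X, MvPowerSeries.coeff_mul_monomial, coeff_eq]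
  split <;> simp

lemma coeff_mul_gen (i j : Fin 4) (g : BB) (d : Fin 4 →₀ ℕ) :
    MvPowerSeries.coeff d (g * (MvPowerSeries.X i * MvPowerSeries.X j - 3)) =
      (if KE i j ≤ d then g (d - KE i j) else 0) - 3 * g d := by
  rw [mul_sub, map_sub, coeff_mul_XX, mul_comm g 3, coeff_three_mul]

/-- Division identity: `f = KQ f * (X i X j - 3) + KR f`. -/
lemma KR_spec (i j : Fin 4) (hij : i ≠ j) (f : BB) :
    f = KQ i j f * (MvPowerSeries.X i * MvPowerSeries.X j - 3) + KR i j f := by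
  apply MvPowerSeries.ext
  intro d
  rw [map_add, coeff_mul_gen, coeff_eq, coeff_eq]
  have master : KG (fun a => f (d + a • KE i j)) = f d + 3 * KQ i j f d := by
    rw [KG_shift]
    congr 1
    · simp
  by_cases h : KE i j ≤ d
  · have hne : ¬ (d i = 0 ∨ d j = 0) := by
      rw [KE_le_iff hij] at h; omega
    rw [if_pos h, KR_apply, if_neg hne, add_zero]
    have : KQ i j f (d - KE i j) = KG (fun a => f (d + a • KE i j)) := by
      rw [KQ_apply]
      congr 1
      funext a
      rw [sub_KE_add d hij h]
    rw [this, master]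
    ring
  · have hz : d i = 0 ∨ d j = 0 := by
      rw [KE_le_iff hij] at h; omega
    rw [if_neg h, KR_apply, if_pos hz, master]
    ring

/-- `KR` kills multiples of `X i X j - 3`. -/
lemma KR_kill (i j : Fin 4) (hij : i ≠ j) (g : BB) :
    KR i j (g * (MvPowerSeries.X i * MvPowerSeries.X j - 3)) = 0 := by
  funext d
  rw [KR_apply]
  split
  case isFalse => rfl
  case isTrue hz =>
    have hval : ∀ a : ℕ, MvPowerSeries.coeff (d + a • KE i j)
          (g * (MvPowerSeries.X i * MvPowerSeries.X j - 3)) =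
        (if a = 0 then 0 else g (d + (a-1) • KE i j)) - 3 * g (d + a • KE i j) := by
      intro a
      rw [coeff_mul_gen]
      congr 1
      by_cases ha : a = 0
      · subst ha
        rw [if_neg, if_pos rfl]
        rw [KE_le_iff hij]
        simp only [zero_smul, add_zero]
        omega
      · rw [if_pos, if_neg ha]
        · rw [add_sub_KE d hij a (by omega)]
        · rw [KE_le_iff hij]
          constructor <;>
            simp only [Finsupp.add_apply, Finsupp.smul_apply, smul_eq_mul,
              KE_self₁ hij, KE_self₂ hij, mul_one] <;> omega
    calc KG (fun a => (g * (MvPowerSeries.X i * MvPowerSeries.X j - 3) : BB) (d + a • KE i j))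
        = KG (fun a => (if a = 0 then 0 else g (d + (a-1) • KE i j)) - 3 * g (d + a • KE i j)) := by
          congr 1; funext a; exact hval a
      _ = KG (fun a => if a = 0 then 0 else g (d + (a-1) • KE i j))
            - KG (fun a => 3 * g (d + a • KE i j)) := KG_sub _ _
      _ = 3 * KG (fun a => g (d + a • KE i j)) - 3 * KG (fun a => g (d + a • KE i j)) := by
          congr 1
          · exact KG_up (fun b => g (d + b • KE i j))
          · rw [KG_const_mul]
      _ = 0 := by ring

end

noncomputable section
open MvPowerSeries

lemma KR_zero (i j : Fin 4) : KR i j (0 : BB) = 0 := by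
  funext d
  rw [KR_apply]
  have : (fun _ : ℕ => (0:BB) ((d + · • KE i j) 0)) = fun _ => (0:ℤ_[3]) := rfl
  split
  · exact KG_zero
  · rfl

lemma KR_add (i j : Fin 4) (f g : BB) : KR i j (f + g) = KR i j f + KR i j g := by
  funext d
  show KR i j (f+g) d = KR i j f d + KR i j g d
  rw [KR_apply, KR_apply, KR_apply]
  split
  · rw [← KG_add]; rfl
  · rw [add_zero]

lemma KR_neg (i j : Fin 4) (f : BB) : KR i j (-f) = - KR i j f := by
  funext d
  show KR i j (-f) d = - KR i j f d
  rw [KR_apply, KR_apply]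
  split
  · rw [← KG_neg]; rfl
  · rw [neg_zero]

lemma KR_sub (i j : Fin 4) (f g : BB) : KR i j (f - g) = KR i j f - KR i j g := by
  rw [sub_eq_add_neg, KR_add, KR_neg, sub_eq_add_neg]

lemma app_three_mul (w : BB) (m : Fin 4 →₀ ℕ) : ((3:BB) * w) m = 3 * w m :=
  coeff_three_mul w m

lemma KR_three (i j : Fin 4) (f : BB) : KR i j ((3:BB) * f) = (3:BB) * KR i j f := by
  funext d
  show KR i j ((3:BB)*f) d = ((3:BB) * KR i j f) d
  rw [app_three_mul (KR i j f) d, KR_apply, KR_apply]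
  split
  · have : (fun a : ℕ => ((3:BB) * f) (d + a • KE i j)) = fun a => 3 * f (d + a • KE i j) := by
      funext a; exact app_three_mul f _
    rw [this, KG_const_mul]
  · rw [mul_zero]

lemma le_add_smul_KE (n d : Fin 4 →₀ ℕ) (a : ℕ) {i j : Fin 4}
    (hni : n i = 0) (hnj : n j = 0) : n ≤ d + a • KE i j ↔ n ≤ d := by
  rw [Finsupp.le_def, Finsupp.le_def]
  constructor
  · intro h k
    rcases eq_or_ne k i with rfl | hki
    · rw [hni]; omega
    · rcases eq_or_ne k j with rfl | hkj
      · rw [hnj]; omega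
      · have := h k
        simp only [Finsupp.add_apply, Finsupp.smul_apply, smul_eq_mul, KE_apply,
          if_neg (Ne.symm hki), if_neg (Ne.symm hkj)] at this
        omega
  · intro h k
    have := h k
    simp only [Finsupp.add_apply, Finsupp.smul_apply, smul_eq_mul]
    omega

lemma add_smul_sub_comm (n d : Fin 4 →₀ ℕ) (a : ℕ) (i j : Fin 4) (h : n ≤ d) :
    d + a • KE i j - n = (d - n) + a • KE i j := by
  rw [Finsupp.le_def] at h
  ext k
  have := h k
  simp only [Finsupp.add_apply, Finsupp.tsub_apply, Finsupp.smul_apply, smul_eq_mul]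
  omega

lemma KR_mul_mono (i j : Fin 4) (n : Fin 4 →₀ ℕ) (hni : n i = 0) (hnj : n j = 0)
    (c : ℤ_[3]) (g : BB) :
    KR i j (g * monomial n c) = KR i j g * monomial n c := by
  funext d
  show KR i j (g * monomial n c) d = MvPowerSeries.coeff d (KR i j g * monomial n c)
  rw [MvPowerSeries.coeff_mul_monomial, KR_apply]
  have hg : ∀ m, (g * monomial n c) m = if n ≤ m then g (m - n) * c else 0 := by
    intro m
    exact MvPowerSeries.coeff_mul_monomial (m := m) (n := n) (φ := g) c
  by_cases hnd : n ≤ d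
  · rw [if_pos hnd, coeff_eq, KR_apply]
    have hind : ((d - n) i = 0 ∨ (d - n) j = 0) ↔ (d i = 0 ∨ d j = 0) := by
      simp only [Finsupp.tsub_apply, hni, hnj, Nat.sub_zero]
    by_cases hz : d i = 0 ∨ d j = 0
    · rw [if_pos hz, if_pos (hind.mpr hz)]
      have : (fun a : ℕ => (g * monomial n c) (d + a • KE i j)) =
          fun a => g ((d - n) + a • KE i j) * c := by
        funext a
        rw [hg, if_pos ((le_add_smul_KE n d a hni hnj).mpr hnd), add_smul_sub_comm n d a i j hnd]
      rw [this]
      calc KG (fun a => g (d - n + a • KE i j) * c)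
          = KG (fun a => c * g (d - n + a • KE i j)) := by congr 1; funext a; ring
        _ = c * KG (fun a => g (d - n + a • KE i j)) := KG_const_mul _ _
        _ = KG (fun a => g (d - n + a • KE i j)) * c := by ring
    · rw [if_neg hz, if_neg (fun h => hz (hind.mp h)), zero_mul]
  · rw [if_neg hnd]
    by_cases hz : d i = 0 ∨ d j = 0
    swap
    · rw [if_neg hz]
    · rw [if_pos hz]
      have : (fun a : ℕ => (g * monomial n c) (d + a • KE i j)) = fun _ => (0:ℤ_[3]) := by
        funext a
        rw [hg, if_neg (fun h => hnd ((le_add_smul_KE n d a hni hnj).mp h))]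
      rw [this, KG_zero]

lemma KR01_mul_gen2 (v : BB) :
    KR 0 1 (v * (MvPowerSeries.X 2 * MvPowerSeries.X 3 - 3)) =
      KR 0 1 v * (MvPowerSeries.X 2 * MvPowerSeries.X 3 - 3) := by
  have expand : ∀ w : BB, w * (MvPowerSeries.X 2 * MvPowerSeries.X 3 - 3) =
      w * monomial (KE 2 3) 1 - (3:BB) * w := by
    intro w
    rw [← X_mul_X]
    ring
  rw [expand, expand, KR_sub, KR_three, KR_mul_mono]
  · rw [KE_apply]; decide
  · rw [KE_apply]; decide

/-- The full reduction modulo the two relations. -/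
def kred (f : BB) : BB := KR 2 3 (KR 0 1 f)

def Kgen1 : BB := MvPowerSeries.X 0 * MvPowerSeries.X 1 - 3
def Kgen2 : BB := MvPowerSeries.X 2 * MvPowerSeries.X 3 - 3

def KI : Ideal BB := Ideal.span {Kgen1, Kgen2}

lemma kred_add (f g : BB) : kred (f + g) = kred f + kred g := by
  unfold kred
  rw [KR_add, KR_add]

lemma kred_sub (f g : BB) : kred (f - g) = kred f - kred g := by
  unfold kred
  rw [KR_sub, KR_sub]

lemma kred_three (f : BB) : kred ((3:BB) * f) = (3:BB) * kred f := by
  unfold kred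
  rw [KR_three, KR_three]

lemma kred_sub_self_mem (f : BB) : f - kred f ∈ KI := by
  have h1 := KR_spec 0 1 (by decide) f
  have h2 := KR_spec 2 3 (by decide) (KR 0 1 f)
  have eq1 : f - kred f = KQ 0 1 f * Kgen1 + KQ 2 3 (KR 0 1 f) * Kgen2 := by
    unfold kred Kgen1 Kgen2
    linear_combination h1 + h2
  rw [eq1]
  exact Ideal.add_mem _
    (Ideal.mul_mem_left _ _ (Ideal.subset_span (by simp)))
    (Ideal.mul_mem_left _ _ (Ideal.subset_span (by simp)))

lemma kred_eq_zero_of_mem {f : BB} (hf : f ∈ KI) : kred f = 0 := by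
  rw [KI, Ideal.mem_span_pair] at hf
  obtain ⟨u, v, huv⟩ := hf
  have h1 : kred (u * Kgen1) = 0 := by
    unfold kred Kgen1
    rw [KR_kill 0 1 (by decide), KR_zero]
  have h2 : kred (v * Kgen2) = 0 := by
    unfold kred Kgen2
    rw [KR01_mul_gen2, KR_kill 2 3 (by decide)]
  rw [← huv, kred_add, h1, h2, add_zero]

lemma kred_eq_of_sub_mem {f g : BB} (h : f - g ∈ KI) : kred f = kred g := by
  have := kred_eq_zero_of_mem h
  rw [kred_sub] at this
  exact sub_eq_zero.mp this

lemma mem_KI_iff_kred_eq_zero (f : BB) : f ∈ KI ↔ kred f = 0 := by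
  constructor
  · exact kred_eq_zero_of_mem
  · intro h
    have := kred_sub_self_mem f
    rwa [h, sub_zero] at this

end

noncomputable section
open MvPowerSeries

def KNormal (d : Fin 4 →₀ ℕ) : Prop := (d 0 = 0 ∨ d 1 = 0) ∧ (d 2 = 0 ∨ d 3 = 0)

instance KNormal.decidable (d : Fin 4 →₀ ℕ) : Decidable (KNormal d) := by
  unfold KNormal; exact inferInstance

def KNormalS (f : BB) : Prop := ∀ d, ¬ KNormal d → f d = 0

def kwt (d : Fin 4 →₀ ℕ) : ℕ := d 0 + d 2

def KGe (n : ℕ) (f : BB) : Prop := ∀ d, (3:ℤ_[3]) ^ (n - kwt d) ∣ f d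

lemma app_addKE (i j : Fin 4) (d : Fin 4 →₀ ℕ) (a : ℕ) (k : Fin 4) :
    (d + a • KE i j) k = d k + a * ((if i = k then 1 else 0) + (if j = k then 1 else 0)) := by
  simp [KE_apply]

lemma addKE01 (d : Fin 4 →₀ ℕ) (a : ℕ) :
    (d + a • KE 0 1) 0 = d 0 + a ∧ (d + a • KE 0 1) 1 = d 1 + a ∧
    (d + a • KE 0 1) 2 = d 2 ∧ (d + a • KE 0 1) 3 = d 3 := by
  refine ⟨?_, ?_, ?_, ?_⟩ <;> simp [app_addKE]

lemma addKE23 (d : Fin 4 →₀ ℕ) (a : ℕ) :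
    (d + a • KE 2 3) 0 = d 0 ∧ (d + a • KE 2 3) 1 = d 1 ∧
    (d + a • KE 2 3) 2 = d 2 + a ∧ (d + a • KE 2 3) 3 = d 3 + a := by
  refine ⟨?_, ?_, ?_, ?_⟩ <;> simp [app_addKE]

lemma kred_normalS (f : BB) : KNormalS (kred f) := by
  intro d hd
  unfold kred
  rw [KR_apply]
  by_cases h23 : d 2 = 0 ∨ d 3 = 0
  · rw [if_pos h23]
    have h01 : ¬ (d 0 = 0 ∨ d 1 = 0) := fun h => hd ⟨h, h23⟩
    have : (fun a : ℕ => KR 0 1 f (d + a • KE 2 3)) = fun _ => (0:ℤ_[3]) := by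
      funext a
      have hcon : ¬ ((d + a • KE 2 3) 0 = 0 ∨ (d + a • KE 2 3) 1 = 0) := by
        simpa [app_addKE] using h01
      rw [KR_apply, if_neg hcon]
    rw [this, KG_zero]
  · rw [if_neg h23]

lemma KR01_of_normalS (w : BB) (h : ∀ d, ¬ (d 0 = 0 ∨ d 1 = 0) → w d = 0) :
    KR 0 1 w = w := by
  funext d
  rw [KR_apply]
  by_cases h01 : d 0 = 0 ∨ d 1 = 0
  · rw [if_pos h01, KG_head]
    · simp
    · intro a ha
      apply h
      simp only [app_addKE]
      push_neg
      norm_num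
      omega
  · rw [if_neg h01]
    exact (h d h01).symm

lemma padic3_ne_zero : (3:ℤ_[3]) ≠ 0 := by
  intro h
  have : ((3:ℕ) : ℤ_[3]) = 0 := by push_cast; exact_mod_cast h
  rw [Nat.cast_eq_zero] at this
  omega

lemma padic3_cancel {k : ℕ} {c : ℤ_[3]} (h : (3:ℤ_[3])^(k+1) ∣ 3 * c) :
    (3:ℤ_[3])^k ∣ c := by
  rw [pow_succ, mul_comm ((3:ℤ_[3])^k) 3] at h
  exact (mul_dvd_mul_iff_left padic3_ne_zero).mp h

lemma padic3_eq_zero_of_forall_dvd {c : ℤ_[3]} (h : ∀ k, (3:ℤ_[3])^k ∣ c) : c = 0 := by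
  by_contra hc
  have hp : ((3:ℕ) : ℤ_[3]) = (3:ℤ_[3]) := by push_cast; ring
  have hpos : 0 < ‖c‖ := norm_pos_iff.mpr hc
  obtain ⟨k, hk⟩ := exists_pow_lt_of_lt_one hpos (by norm_num : (3:ℝ)⁻¹ < 1)
  have hmem : c ∈ Ideal.span {((3:ℕ):ℤ_[3])^k} :=
    Ideal.mem_span_singleton.mpr (by rw [hp]; exact h k)
  have hle := (PadicInt.norm_le_pow_iff_mem_span_pow c k).mpr hmem
  have heq : ((3:ℕ):ℝ)^(-(k:ℤ)) = ((3:ℝ)⁻¹)^k := by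
    push_cast
    rw [zpow_neg, zpow_natCast, inv_pow]
  rw [heq] at hle
  linarith
lemma KGe_KR01 (n : ℕ) (f : BB) (h : KGe n f) : KGe n (KR 0 1 f) := by
  intro d
  rw [KR_apply]
  split
  · apply KG_dvd
    intro a
    have hco := h (d + a • KE 0 1)
    have hwt : kwt (d + a • KE 0 1) = kwt d + a := by
      obtain ⟨e0, e1, e2, e3⟩ := addKE01 d a
      unfold kwt; omega
    rw [hwt] at hco
    rw [Nat.sub_sub]
    exact hco
  · exact dvd_zero _

lemma KGe_KR23 (n : ℕ) (f : BB) (h : KGe n f) : KGe n (KR 2 3 f) := by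
  intro d
  rw [KR_apply]
  split
  · apply KG_dvd
    intro a
    have hco := h (d + a • KE 2 3)
    have hwt : kwt (d + a • KE 2 3) = kwt d + a := by
      obtain ⟨e0, e1, e2, e3⟩ := addKE23 d a
      unfold kwt; omega
    rw [hwt] at hco
    rw [Nat.sub_sub]
    exact hco
  · exact dvd_zero _

lemma KGe_kred (n : ℕ) (f : BB) (h : KGe n f) : KGe n (kred f) :=
  KGe_KR23 n _ (KGe_KR01 n f h)

lemma KGe_X0pow (n : ℕ) (y : BB) : KGe n ((MvPowerSeries.X 0)^n * y) := by
  intro d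
  have : ((MvPowerSeries.X 0 : BB)^n * y) d =
      if Finsupp.single 0 n ≤ d then y (d - Finsupp.single 0 n) else 0 := by
    rw [MvPowerSeries.X_pow_eq]
    have := MvPowerSeries.coeff_monomial_mul (m := d) (n := Finsupp.single 0 n)
      (φ := y) (1:ℤ_[3])
    rw [coeff_eq] at this
    rw [this]
    split <;> simp [coeff_eq]
  rw [this]
  split
  case isTrue hle =>
    have : n ≤ d 0 := by
      have := Finsupp.le_def.mp hle 0
      simpa using this
    have : n - kwt d = 0 := by unfold kwt; omega
    rw [this, pow_zero]
    exact one_dvd _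
  case isFalse => exact dvd_zero _

end

noncomputable section
open MvPowerSeries

/-- `e₂`, `e₃` as explicit exponents. -/
def KS2 : Fin 4 →₀ ℕ := Finsupp.single 2 1
def KS3 : Fin 4 →₀ ℕ := Finsupp.single 3 1

lemma KS2_def : KS2 = Finsupp.single 2 1 := rfl
lemma KS3_def : KS3 = Finsupp.single 3 1 := rfl

lemma appX3 (z : BB) (m : Fin 4 →₀ ℕ) :
    (MvPowerSeries.X 3 * z : BB) m =
      if KS3 ≤ m then z (m - KS3) else 0 := by
  have h : (MvPowerSeries.X 3 * z : BB) = monomial (KS3) 1 * z := by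
    rw [MvPowerSeries.X_def, KS3_def]
  rw [h]
  have := MvPowerSeries.coeff_monomial_mul (m := m) (n := KS3) (φ := z) (1:ℤ_[3])
  show MvPowerSeries.coeff m ((monomial (KS3)) (1:ℤ_[3]) * z) = _
  rw [this]
  split <;> simp [coeff_eq]

lemma single3_le_iff (m : Fin 4 →₀ ℕ) : KS3 ≤ m ↔ 1 ≤ m 3 := by
  rw [KS3_def]; exact Finsupp.single_le_iff

lemma sub_single3 (m : Fin 4 →₀ ℕ) :
    (m - KS3) 0 = m 0 ∧ (m - KS3) 1 = m 1 ∧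
    (m - KS3) 2 = m 2 ∧ (m - KS3) 3 = m 3 - 1 := by
  refine ⟨?_, ?_, ?_, ?_⟩ <;> simp [KS2, KS3, Finsupp.tsub_apply, Finsupp.single_apply]

lemma X3z_01normal (z : BB) (hz : KNormalS z) :
    ∀ m, ¬ (m 0 = 0 ∨ m 1 = 0) → (MvPowerSeries.X 3 * z : BB) m = 0 := by
  intro m hm
  rw [appX3]
  split
  case isFalse => rfl
  case isTrue =>
    apply hz
    obtain ⟨s0, s1, s2, s3⟩ := sub_single3 m
    intro hK
    rcases hK.1 with h | h <;> omega

lemma add_zero_KE (d : Fin 4 →₀ ℕ) (i j : Fin 4) : d + 0 • KE i j = d := by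
  simp

lemma shift_arg_eq (d : Fin 4 →₀ ℕ) :
    d + 1 • KE 2 3 - KS3 = d + KS2 := by
  ext k
  fin_cases k <;> (simp [KS2, KS3, KE_apply, Finsupp.tsub_apply, app_addKE, Finsupp.single_apply]; try omega)

lemma kred_X3_app (z : BB) (hz : KNormalS z) (d : Fin 4 →₀ ℕ) :
    kred (MvPowerSeries.X 3 * z) d =
      if KNormal d then
        (if d 3 = 0 then 3 * z (d + KS2) else z (d - KS3))
      else 0 := by
  unfold kred
  rw [KR01_of_normalS _ (X3z_01normal z hz), KR_apply]
  by_cases h23 : d 2 = 0 ∨ d 3 = 0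
  swap
  · rw [if_neg h23, if_neg (fun hK : KNormal d => h23 hK.2)]
  · rw [if_pos h23]
    by_cases h01 : d 0 = 0 ∨ d 1 = 0
    swap
    · rw [if_neg (fun hK : KNormal d => h01 hK.1)]
      have : (fun a : ℕ => (MvPowerSeries.X 3 * z : BB) (d + a • KE 2 3)) = fun _ => (0:ℤ_[3]) := by
        funext a
        obtain ⟨e0, e1, e2, e3⟩ := addKE23 d a
        exact X3z_01normal z hz _ (by omega)
      rw [this, KG_zero]
    · have hk : KNormal d := ⟨h01, h23⟩
      rw [if_pos hk]
      by_cases hd3 : d 3 = 0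
      · rw [if_pos hd3]
        rw [KG_one]
        · congr 1
          obtain ⟨e0, e1, e2, e3⟩ := addKE23 d 1
          rw [appX3, if_pos (by rw [single3_le_iff]; omega), shift_arg_eq]
        · rw [add_zero_KE, appX3, if_neg (by rw [single3_le_iff]; omega)]
        · intro a ha
          obtain ⟨e0, e1, e2, e3⟩ := addKE23 d a
          rw [appX3]
          split
          next =>
            apply hz
            obtain ⟨s0, s1, s2, s3⟩ := sub_single3 (d + a • KE 2 3)
            intro hK
            rcases hK.2 with h | h <;> omega
          next => rfl
      · rw [if_neg hd3]
        rw [KG_head]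
        · rw [add_zero_KE, appX3, if_pos (by rw [single3_le_iff]; omega)]
        · intro a ha
          obtain ⟨e0, e1, e2, e3⟩ := addKE23 d a
          rw [appX3]
          split
          next =>
            apply hz
            obtain ⟨s0, s1, s2, s3⟩ := sub_single3 (d + a • KE 2 3)
            intro hK
            rcases hK.2 with h | h <;> omega
          next => rfl

lemma add_single3_coords (d : Fin 4 →₀ ℕ) :
    (d + KS3) 0 = d 0 ∧ (d + KS3) 1 = d 1 ∧
    (d + KS3) 2 = d 2 ∧ (d + KS3) 3 = d 3 + 1 := by
  refine ⟨?_, ?_, ?_, ?_⟩ <;> simp [KS2, KS3, Finsupp.single_apply]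

lemma sub_single2_coords (d : Fin 4 →₀ ℕ) :
    (d - KS2) 0 = d 0 ∧ (d - KS2) 1 = d 1 ∧
    (d - KS2) 2 = d 2 - 1 ∧ (d - KS2) 3 = d 3 := by
  refine ⟨?_, ?_, ?_, ?_⟩ <;> simp [KS2, KS3, Finsupp.tsub_apply, Finsupp.single_apply]

/-- Pulling weight bounds back along multiplication by `X 3`. -/
lemma KGe_back (N : ℕ) (z : BB) (hz : KNormalS z)
    (h : KGe N (kred (MvPowerSeries.X 3 * z))) : KGe N z := by
  intro d
  by_cases hn : KNormal d
  swap
  · rw [hz d hn]; exact dvd_zero _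
  by_cases hd2 : d 2 = 0
  · have key := h (d + KS3)
    obtain ⟨c0, c1, c2, c3⟩ := add_single3_coords d
    rw [kred_X3_app z hz] at key
    rw [if_pos (show KNormal (d + KS3) by
      constructor
      · rcases hn.1 with h' | h' <;> omega
      · left; omega)] at key
    rw [if_neg (by omega)] at key
    have harg : d + KS3 - KS3 = d := by
      ext k; simp [KS2, KS3, Finsupp.tsub_apply, Finsupp.single_apply]
    rw [harg] at key
    have hwt : kwt (d + KS3) = kwt d := by unfold kwt; omega
    rwa [hwt] at key
  · have hd3 : d 3 = 0 := by rcases hn.2 with h' | h' <;> omega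
    have key := h (d - KS2)
    obtain ⟨c0, c1, c2, c3⟩ := sub_single2_coords d
    rw [kred_X3_app z hz] at key
    rw [if_pos (show KNormal (d - KS2) by
      exact ⟨by rcases hn.1 with h' | h' <;> omega, by right; omega⟩)] at key
    rw [if_pos (by omega)] at key
    have harg : d - KS2 + KS2 = d := by
      ext k
      fin_cases k <;> (simp [KS2, KS3, Finsupp.tsub_apply, Finsupp.single_apply]; try omega)
    rw [harg] at key
    have hwt : kwt (d - KS2) = kwt d - 1 := by unfold kwt; omega
    rw [hwt] at key
    by_cases hN : kwt d ≤ N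
    · have h1 : 1 ≤ kwt d := by unfold kwt; omega
      have heq : N - (kwt d - 1) = (N - kwt d) + 1 := by omega
      rw [heq] at key
      exact padic3_cancel key
    · have : N - kwt d = 0 := by omega
      rw [this, pow_zero]
      exact one_dvd _

end

noncomputable section
open MvPowerSeries

abbrev BBZ : Type := MvPowerSeries (Fin 4) (ZMod 3)

lemma app_mulB (f g : BB) (d : Fin 4 →₀ ℕ) :
    (f * g) d = ∑ p ∈ Finset.HasAntidiagonal.antidiagonal d, f p.1 * g p.2 :=
  MvPowerSeries.coeff_mul d f g

lemma app_mulZ (f g : BBZ) (d : Fin 4 →₀ ℕ) :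
    (f * g) d = ∑ p ∈ Finset.HasAntidiagonal.antidiagonal d, f p.1 * g p.2 :=
  MvPowerSeries.coeff_mul d f g

lemma app_oneB (d : Fin 4 →₀ ℕ) : (1 : BB) d = if d = 0 then 1 else 0 :=
  MvPowerSeries.coeff_one d

lemma app_oneZ (d : Fin 4 →₀ ℕ) : (1 : BBZ) d = if d = 0 then 1 else 0 :=
  MvPowerSeries.coeff_one d

/-- The homomorphism killing all monomials involving `X 0` or `X 2` and reducing
coefficients mod 3. -/
def Kphi : BB →+* BBZ where
  toFun f := fun d => if d 0 = 0 ∧ d 2 = 0 then PadicInt.toZMod (f d) else 0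
  map_one' := by
    funext d
    show (if d 0 = 0 ∧ d 2 = 0 then PadicInt.toZMod ((1:BB) d) else 0) = (1:BBZ) d
    rw [app_oneZ, app_oneB]
    by_cases hd : d = 0
    · subst hd
      rw [if_pos rfl, if_pos rfl, if_pos ⟨rfl, rfl⟩, map_one]
    · rw [if_neg hd, if_neg hd]
      split
      · exact RingHom.map_zero PadicInt.toZMod
      · rfl
  map_zero' := by
    funext d
    show (if d 0 = 0 ∧ d 2 = 0 then PadicInt.toZMod ((0:BB) d) else 0) = (0:BBZ) d
    have h0 : (0:BB) d = 0 := rfl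
    rw [h0]
    show _ = (0:ℤ_[3] → ZMod 3) 0
    split
    · exact RingHom.map_zero PadicInt.toZMod
    · rfl
  map_add' f g := by
    funext d
    show (if d 0 = 0 ∧ d 2 = 0 then PadicInt.toZMod ((f + g) d) else 0) = _
    have : (f + g) d = f d + g d := rfl
    rw [this, map_add]
    show _ = (if d 0 = 0 ∧ d 2 = 0 then PadicInt.toZMod (f d) else 0)
      + (if d 0 = 0 ∧ d 2 = 0 then PadicInt.toZMod (g d) else 0)
    split <;> simp
  map_mul' f g := by
    funext d
    show (if d 0 = 0 ∧ d 2 = 0 then PadicInt.toZMod ((f * g) d) else 0) = ((_ * _ : BBZ)) d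
    show (if d 0 = 0 ∧ d 2 = 0 then PadicInt.toZMod (MvPowerSeries.coeff d (f * g)) else 0) =
      MvPowerSeries.coeff d ((_ * _ : BBZ))
    rw [MvPowerSeries.coeff_mul]
    refine Eq.trans ?_ (MvPowerSeries.coeff_mul (R := ZMod 3) d _ _).symm
    by_cases hd : d 0 = 0 ∧ d 2 = 0
    · rw [if_pos hd, map_sum]
      apply Finset.sum_congr rfl
      intro p hp
      rw [Finset.HasAntidiagonal.mem_antidiagonal] at hp
      have h0 : p.1 0 + p.2 0 = d 0 := by rw [← hp]; rfl
      have h2 : p.1 2 + p.2 2 = d 2 := by rw [← hp]; rfl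
      have hp1 : p.1 0 = 0 ∧ p.1 2 = 0 := by omega
      have hp2 : p.2 0 = 0 ∧ p.2 2 = 0 := by omega
      rw [map_mul]
      show _ = (if p.1 0 = 0 ∧ p.1 2 = 0 then PadicInt.toZMod (f p.1) else 0)
        * (if p.2 0 = 0 ∧ p.2 2 = 0 then PadicInt.toZMod (g p.2) else 0)
      rw [if_pos hp1, if_pos hp2]
      rfl
    · rw [if_neg hd]
      symm
      apply Finset.sum_eq_zero
      intro p hp
      rw [Finset.HasAntidiagonal.mem_antidiagonal] at hp
      have h0 : p.1 0 + p.2 0 = d 0 := by rw [← hp]; rfl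
      have h2 : p.1 2 + p.2 2 = d 2 := by rw [← hp]; rfl
      show (if p.1 0 = 0 ∧ p.1 2 = 0 then PadicInt.toZMod (f p.1) else 0)
        * (if p.2 0 = 0 ∧ p.2 2 = 0 then PadicInt.toZMod (g p.2) else 0) = 0
      have : ¬ (p.1 0 = 0 ∧ p.1 2 = 0) ∨ ¬ (p.2 0 = 0 ∧ p.2 2 = 0) := by
        by_contra hcon
        push_neg at hcon
        obtain ⟨a, b⟩ := hcon
        apply hd
        omega
      rcases this with h | h
      · rw [if_neg h, zero_mul]
      · rw [if_neg h, mul_zero]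

lemma Kphi_apply (f : BB) (d : Fin 4 →₀ ℕ) :
    Kphi f d = if d 0 = 0 ∧ d 2 = 0 then PadicInt.toZMod (f d) else 0 := rfl

lemma dvd3_iff (c : ℤ_[3]) : PadicInt.toZMod c = 0 ↔ (3:ℤ_[3]) ∣ c := by
  have hp : ((3:ℕ) : ℤ_[3]) = (3:ℤ_[3]) := by push_cast; ring
  rw [← hp, ← PadicInt.norm_lt_one_iff_dvd, ← RingHom.mem_ker, PadicInt.ker_toZMod,
    IsLocalRing.mem_maximalIdeal, mem_nonunits_iff, PadicInt.isUnit_iff]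
  constructor
  · intro h; exact lt_of_le_of_ne (PadicInt.norm_le_one c) h
  · intro h; exact ne_of_lt h

end

noncomputable section
open MvPowerSeries

def KM : Ideal BB := Ideal.span {MvPowerSeries.X 0, MvPowerSeries.X 2, (3:BB)}

lemma appXi (i : Fin 4) (d : Fin 4 →₀ ℕ) :
    (MvPowerSeries.X i : BB) d = if d = Finsupp.single i 1 then 1 else 0 :=
  MvPowerSeries.coeff_X d i

lemma Kphi_X0 : Kphi (MvPowerSeries.X 0) = 0 := by
  funext d
  rw [Kphi_apply]
  show _ = (0 : ZMod 3)
  split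
  case isFalse => rfl
  case isTrue h =>
    rw [appXi]
    rw [if_neg]
    · exact RingHom.map_zero PadicInt.toZMod
    · intro hcon
      have : d 0 = 1 := by rw [hcon]; simp
      omega
lemma Kphi_X2 : Kphi (MvPowerSeries.X 2) = 0 := by
  funext d
  rw [Kphi_apply]
  show _ = (0 : ZMod 3)
  split
  case isFalse => rfl
  case isTrue h =>
    rw [appXi]
    rw [if_neg]
    · exact RingHom.map_zero PadicInt.toZMod
    · intro hcon
      have : d 2 = 1 := by rw [hcon]; simp
      omega

lemma Kphi_three : Kphi (3:BB) = 0 := by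
  have h1 : Kphi (3:BB) = (3:BBZ) := map_ofNat Kphi 3
  have h2 : (3:BBZ) = (MvPowerSeries.C 3 : BBZ) := by rw [map_ofNat]
  have h3 : (3 : ZMod 3) = 0 := by decide
  rw [h1, h2, h3, map_zero]

lemma dvd_three_of_coeffs {w : BB} (h : ∀ d, (3:ℤ_[3]) ∣ w d) :
    ∃ h' : BB, w = (3:BB) * h' := by
  refine ⟨fun d => Classical.choose (h d), ?_⟩
  apply MvPowerSeries.ext
  intro d
  rw [coeff_eq]
  exact (Classical.choose_spec (h d)).trans (coeff_three_mul (fun d => Classical.choose (h d)) d).symm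

lemma ker_Kphi : RingHom.ker Kphi = KM := by
  apply le_antisymm
  · intro f hf
    rw [RingHom.mem_ker] at hf
    set g0 : BB := fun d => if d 0 ≠ 0 then f d else 0 with hg0
    set g2 : BB := fun d => if d 0 = 0 ∧ d 2 ≠ 0 then f d else 0 with hg2
    set g3 : BB := fun d => if d 0 = 0 ∧ d 2 = 0 then f d else 0 with hg3
    have hsplit : f = g0 + g2 + g3 := by
      funext d
      show f d = g0 d + g2 d + g3 d
      rw [hg0, hg2, hg3]
      by_cases h0 : d 0 = 0
      · by_cases h2 : d 2 = 0
        · simp [h0, h2]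
        · simp [h0, h2]
      · simp [h0]
    have hd0 : MvPowerSeries.X 0 ∣ g0 := by
      rw [MvPowerSeries.X_dvd_iff]
      intro m hm
      show g0 m = 0
      rw [hg0]
      simp [hm]
    have hd2 : MvPowerSeries.X 2 ∣ g2 := by
      rw [MvPowerSeries.X_dvd_iff]
      intro m hm
      show g2 m = 0
      rw [hg2]
      simp [hm]
    have hd3 : ∃ h', g3 = (3:BB) * h' := by
      apply dvd_three_of_coeffs
      intro d
      rw [hg3]
      show (3:ℤ_[3]) ∣ (if d 0 = 0 ∧ d 2 = 0 then f d else 0)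
      split
      case isTrue hgood =>
        rw [← dvd3_iff]
        have := congrFun hf d
        rw [Kphi_apply, if_pos hgood] at this
        exact this
      case isFalse => exact dvd_zero _
    obtain ⟨u, hu⟩ := hd0
    obtain ⟨v, hv⟩ := hd2
    obtain ⟨w, hw⟩ := hd3
    rw [hsplit, hu, hv, hw]
    apply Ideal.add_mem
    apply Ideal.add_mem
    · exact Ideal.mul_mem_right _ _ (Ideal.subset_span (by simp))
    · exact Ideal.mul_mem_right _ _ (Ideal.subset_span (by simp))
    · exact Ideal.mul_mem_right _ _ (Ideal.subset_span (by simp))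
  · rw [KM, Ideal.span_le]
    rintro x (rfl | rfl | rfl)
    · exact Kphi_X0
    · exact Kphi_X2
    · exact Kphi_three

instance : IsDomain BBZ := NoZeroDivisors.to_isDomain _

lemma KM_prime : KM.IsPrime := by
  rw [← ker_Kphi]
  exact RingHom.ker_isPrime Kphi

lemma X1_not_mem_KM : MvPowerSeries.X 1 ∉ KM := by
  rw [← ker_Kphi, RingHom.mem_ker]
  intro hcon
  have := congrFun hcon (Finsupp.single 1 1)
  rw [Kphi_apply, if_pos (by constructor <;> simp [Finsupp.single_apply])] at this
  rw [appXi, if_pos rfl, map_one] at this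
  exact one_ne_zero this

lemma X3_not_mem_KM : MvPowerSeries.X 3 ∉ KM := by
  rw [← ker_Kphi, RingHom.mem_ker]
  intro hcon
  have := congrFun hcon (Finsupp.single 3 1)
  rw [Kphi_apply, if_pos (by constructor <;> simp [Finsupp.single_apply])] at this
  rw [appXi, if_pos rfl, map_one] at this
  exact one_ne_zero this

lemma KI_le_KM : KI ≤ KM := by
  rw [KI, Ideal.span_le]
  rintro x (rfl | rfl)
  · exact Ideal.sub_mem _
      (Ideal.mul_mem_right _ _ (Ideal.subset_span (by simp)))
      (Ideal.subset_span (by simp))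
  · exact Ideal.sub_mem _
      (Ideal.mul_mem_right _ _ (Ideal.subset_span (by simp)))
      (Ideal.subset_span (by simp))

end

noncomputable section
open MvPowerSeries

lemma relIdeal_eq_KI : (relIdeal : Ideal BB) = KI := rfl

local notation "mkA" => Ideal.Quotient.mk relIdeal

lemma mk_three : mkA (3:B) = (3:A) := map_ofNat _ 3

lemma rel1 : a1 * b1 = (3:A) := by
  rw [a1, b1, ← map_mul, ← mk_three]
  rw [Ideal.Quotient.eq]
  exact Ideal.subset_span (by simp)

lemma rel2 : a2 * b2 = (3:A) := by
  rw [a2, b2, ← map_mul, ← mk_three]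
  rw [Ideal.Quotient.eq]
  exact Ideal.subset_span (by simp)

/-- `P = (a₁, a₂)` is the image of `KM = (X₀, X₂, 3)`. -/
lemma spanP_eq : (Ideal.span {a1, a2} : Ideal A) = Ideal.map mkA KM := by
  rw [KM, Ideal.map_span]
  have himg : (mkA '' {MvPowerSeries.X 0, MvPowerSeries.X 2, (3:B)}) =
      {a1, a2, (3:A)} := by
    rw [Set.image_insert_eq, Set.image_insert_eq, Set.image_singleton, mk_three]
    rfl
  rw [himg]
  apply le_antisymm
  · apply Ideal.span_mono
    intro x hx
    rcases hx with rfl | rfl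
    · exact Set.mem_insert _ _
    · exact Set.mem_insert_of_mem _ (Set.mem_insert _ _)
  · rw [Ideal.span_le]
    rintro x (rfl | rfl | rfl)
    · exact Ideal.subset_span (Set.mem_insert _ _)
    · exact Ideal.subset_span (Set.mem_insert_of_mem _ (Set.mem_singleton _))
    · rw [← rel1]
      exact Ideal.mul_mem_right _ _ (Ideal.subset_span (Set.mem_insert _ _))

lemma hP_prime : (Ideal.span {a1, a2} : Ideal A).IsPrime := by
  rw [spanP_eq]
  haveI := KM_prime
  apply Ideal.map_isPrime_of_surjective Ideal.Quotient.mk_surjective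
  rw [Ideal.mk_ker, relIdeal_eq_KI]
  exact KI_le_KM

lemma comap_spanP : Ideal.comap mkA (Ideal.span {a1, a2} : Ideal A) = KM := by
  rw [spanP_eq, Ideal.comap_map_of_surjective _ Ideal.Quotient.mk_surjective]
  rw [← RingHom.ker_eq_comap_bot, Ideal.mk_ker, relIdeal_eq_KI]
  exact sup_eq_left.mpr KI_le_KM

lemma b1_not_mem_P : b1 ∉ (Ideal.span {a1, a2} : Ideal A) := by
  intro h
  have : MvPowerSeries.X 1 ∈ Ideal.comap mkA (Ideal.span {a1, a2} : Ideal A) := h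
  rw [comap_spanP] at this
  exact X1_not_mem_KM this

lemma b2_not_mem_P : b2 ∉ (Ideal.span {a1, a2} : Ideal A) := by
  intro h
  have : MvPowerSeries.X 3 ∈ Ideal.comap mkA (Ideal.span {a1, a2} : Ideal A) := h
  rw [comap_spanP] at this
  exact X3_not_mem_KM this

lemma app_threepow_mul (n : ℕ) (f : BB) (d : Fin 4 →₀ ℕ) :
    ((3:BB)^n * f) d = 3^n * f d := by
  induction n generalizing d with
  | zero => rw [pow_zero, pow_zero, one_mul, one_mul]
  | succ n ih =>
      have h : (3:BB)^(n+1) * f = (3:BB) * ((3:BB)^n * f) := by ring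
      rw [h, app_three_mul, ih, pow_succ]
      ring

lemma kred_threepow (n : ℕ) (w : BB) : kred ((3:BB)^n * w) = (3:BB)^n * kred w := by
  induction n with
  | zero => rw [pow_zero, one_mul, one_mul]
  | succ n ih =>
      have h : (3:BB)^(n+1) * w = (3:BB) * ((3:BB)^n * w) := by ring
      rw [h, kred_three, ih]
      ring

lemma A_torsion_free (n : ℕ) (z : A) (h : (3:A)^n * z = 0) : z = 0 := by
  obtain ⟨w, rfl⟩ := Ideal.Quotient.mk_surjective z
  have hmk : (3:A)^n * mkA w = mkA ((3:B)^n * w) := by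
    rw [map_mul, map_pow, mk_three]
  rw [hmk, Ideal.Quotient.eq_zero_iff_mem] at h
  rw [relIdeal_eq_KI] at h
  have hk := kred_eq_zero_of_mem h
  rw [kred_threepow] at hk
  have hz : kred w = 0 := by
    funext d
    have := congrFun hk d
    rw [app_threepow_mul] at this
    have h3 : ((3:ℤ_[3])^n) ≠ 0 := pow_ne_zero _ padic3_ne_zero
    have h0 : (0:BB) d = 0 := rfl
    rw [h0] at this
    rcases mul_eq_zero.mp this with h' | h'
    · exact absurd h' h3
    · exact h'
  rw [Ideal.Quotient.eq_zero_iff_mem, relIdeal_eq_KI, mem_KI_iff_kred_eq_zero]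
  exact hz

/-- iterated multiplication by `X 3` on reduced representatives -/
def Zit (w : BB) : ℕ → BB
  | 0 => kred w
  | (k+1) => kred (MvPowerSeries.X 3 * Zit w k)

lemma Zit_normalS (w : BB) (k : ℕ) : KNormalS (Zit w k) := by
  cases k with
  | zero => exact kred_normalS w
  | succ k => exact kred_normalS _

lemma Zit_eq (w : BB) (n : ℕ) : Zit w n = kred ((MvPowerSeries.X 3)^n * w) := by
  induction n with
  | zero => rw [Zit, pow_zero, one_mul]
  | succ n ih =>
      rw [Zit, ih]
      apply kred_eq_of_sub_mem
      have h1 := kred_sub_self_mem ((MvPowerSeries.X 3:BB)^n * w)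
      have h2 := Ideal.mul_mem_left KI (MvPowerSeries.X 3) h1
      have h3 := KI.neg_mem h2
      have heq : MvPowerSeries.X 3 * kred ((MvPowerSeries.X 3:BB)^n * w)
          - (MvPowerSeries.X 3:BB)^(n+1) * w =
          -(MvPowerSeries.X 3 * (((MvPowerSeries.X 3:BB)^n * w)
            - kred ((MvPowerSeries.X 3:BB)^n * w))) := by ring
      rw [heq]
      exact h3

lemma Zit_KGe_down (w : BB) (N : ℕ) :
    ∀ n, KGe N (Zit w n) → KGe N (Zit w 0) := by
  intro n
  induction n with
  | zero => exact id
  | succ n ih =>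
      intro h
      apply ih
      exact KGe_back N (Zit w n) (Zit_normalS w n) h

/-- Every prime strictly below `P = (a₁,a₂)` is zero. -/
theorem prime_below_eq_bot (q : Ideal A) (hq : q.IsPrime)
    (hlt : q < Ideal.span {a1, a2}) : q = ⊥ := by
  have hqP : q ≤ Ideal.span {a1, a2} := le_of_lt hlt
  have ha1q : a1 ∉ q := by
    intro h
    have h3 : (3:A) ∈ q := by
      rw [← rel1]
      exact Ideal.mul_mem_right _ _ h
    have h3' : a2 * b2 ∈ q := by rw [rel2]; exact h3
    have ha2 : a2 ∈ q := by
      rcases hq.mem_or_mem h3' with h' | h'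
      · exact h'
      · exact absurd (hqP h') b2_not_mem_P
    exact hlt.not_ge (Ideal.span_le.mpr (by
      rintro x (rfl | rfl)
      · exact h
      · exact ha2))
  have step : ∀ x ∈ q, ∃ y ∈ q, b2 * x = a1 * y := by
    intro x hx
    obtain ⟨s, t, hst⟩ := Ideal.mem_span_pair.mp (hqP hx)
    refine ⟨b2 * s + b1 * t, ?_, ?_⟩
    · have key : a1 * (b2 * s + b1 * t) = b2 * x := by
        linear_combination t * rel1 - t * rel2 + b2 * hst
      have : a1 * (b2 * s + b1 * t) ∈ q := by
        rw [key]
        exact Ideal.mul_mem_left _ _ hx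
      rcases hq.mem_or_mem this with h' | h'
      · exact absurd h' ha1q
      · exact h'
    · linear_combination - t * rel1 + t * rel2 - b2 * hst
  have iter : ∀ n : ℕ, ∀ x ∈ q, ∃ y ∈ q, b2^n * x = a1^n * y := by
    intro n
    induction n with
    | zero => exact fun x hx => ⟨x, hx, by ring⟩
    | succ n ih =>
        intro x hx
        obtain ⟨y1, hy1, hstep⟩ := step x hx
        obtain ⟨y2, hy2, hih⟩ := ih y1 hy1
        exact ⟨y2, hy2, by
          rw [pow_succ, pow_succ]
          linear_combination b2^n * hstep + a1 * hih⟩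
  rw [eq_bot_iff]
  intro x hx
  obtain ⟨w, rfl⟩ := Ideal.Quotient.mk_surjective x
  show mkA w ∈ (⊥ : Ideal A)
  rw [Ideal.mem_bot, Ideal.Quotient.eq_zero_iff_mem, relIdeal_eq_KI,
    mem_KI_iff_kred_eq_zero]
  by_contra hz
  have ⟨dh, hdh⟩ : ∃ d, kred w d ≠ 0 := by
    by_contra hcon
    push_neg at hcon
    exact hz (funext hcon)
  have ⟨K, hK⟩ : ∃ K, ¬ (3:ℤ_[3])^K ∣ kred w dh := by
    by_contra hcon
    push_neg at hcon
    exact hdh (padic3_eq_zero_of_forall_dvd hcon)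
  set N := K + kwt dh with hN
  obtain ⟨y, hy, heq⟩ := iter N _ hx
  obtain ⟨v, rfl⟩ := Ideal.Quotient.mk_surjective y
  have hBeq : mkA ((MvPowerSeries.X 3)^N * w) = mkA ((MvPowerSeries.X 0)^N * v) := by
    rw [map_mul, map_mul, map_pow, map_pow]
    exact heq
  rw [Ideal.Quotient.eq] at hBeq
  have hkred : Zit w N = kred ((MvPowerSeries.X 0)^N * v) := by
    rw [Zit_eq]
    exact kred_eq_of_sub_mem (by rw [relIdeal_eq_KI] at hBeq; exact hBeq)
  have hGe : KGe N (Zit w N) := by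
    rw [hkred]
    exact KGe_kred N _ (KGe_X0pow N v)
  have hGe0 : KGe N (kred w) := Zit_KGe_down w N N hGe
  have := hGe0 dh
  rw [hN] at this
  rw [Nat.add_sub_cancel] at this
  exact hK this

/-- There is a prime strictly below `P`. -/
theorem exists_prime_lt :
    ∃ q : Ideal A, q.IsPrime ∧ q < Ideal.span {a1, a2} := by
  set P : Ideal A := Ideal.span {a1, a2} with hPdef
  have hPp : P.IsPrime := hP_prime
  set S : Submonoid A := Submonoid.closure ((P : Set A)ᶜ ∪ {a1}) with hS
  have hSprop : ∀ z ∈ S, ∃ (n : ℕ) (s : A), s ∉ P ∧ z = a1^n * s := by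
    intro z hz
    induction hz using Submonoid.closure_induction with
    | mem x hx =>
        rcases hx with hx | hx
        · exact ⟨0, x, hx, by ring⟩
        · rw [hx]
          exact ⟨1, 1, fun h => hPp.ne_top (Ideal.eq_top_of_isUnit_mem _ h isUnit_one),
            by ring⟩
    | one => exact ⟨0, 1, fun h => hPp.ne_top (Ideal.eq_top_of_isUnit_mem _ h isUnit_one),
        by ring⟩
    | mul x y hx hy ihx ihy =>
        obtain ⟨n, s, hs, rfl⟩ := ihx
        obtain ⟨m, t, ht, rfl⟩ := ihy
        refine ⟨n + m, s * t, ?_, by ring⟩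
        intro hmem
        rcases hPp.mem_or_mem hmem with h | h
        · exact hs h
        · exact ht h
  have h0S : (0:A) ∉ S := by
    intro h0
    obtain ⟨n, s, hs, hzero⟩ := hSprop 0 h0
    have h3 : (3:A)^n * s = 0 := by
      have : (3:A)^n * s = b1^n * (a1^n * s) := by
        rw [← rel1]
        ring
      rw [this, ← hzero, mul_zero]
    have := A_torsion_free n s h3
    exact hs (this ▸ P.zero_mem)
  have hdisj : Disjoint ((⊥ : Ideal A) : Set A) (S : Set A) := by
    rw [Set.disjoint_left]
    intro x hxbot hxS
    rw [SetLike.mem_coe, Ideal.mem_bot] at hxbot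
    rw [hxbot] at hxS
    exact h0S hxS
  obtain ⟨p, hp, -, hpdisj⟩ := Ideal.exists_le_prime_disjoint ⊥ S hdisj
  refine ⟨p, hp, ?_⟩
  have hpP : p ≤ P := by
    intro x hxp
    by_contra hxP
    have hxS : x ∈ S := Submonoid.subset_closure (Or.inl hxP)
    exact Set.disjoint_left.mp hpdisj hxp hxS
  have ha1p : a1 ∉ p := by
    intro h
    have hxS : a1 ∈ S := Submonoid.subset_closure (Or.inr rfl)
    exact Set.disjoint_left.mp hpdisj h hxS
  exact lt_of_le_of_ne hpP (fun h => ha1p (h ▸ Ideal.subset_span (Set.mem_insert _ _)))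

/-- In `A`, the prime ideal `P = (a₁, a₂)` has height `1` (as a point of the prime
spectrum of `A`, ordered by inclusion). -/
theorem span_a1_a2_height_one : ∃ hP : (Ideal.span {a1, a2} : Ideal A).IsPrime,
    Order.height (⟨Ideal.span {a1, a2}, hP⟩ : PrimeSpectrum A) = 1 := by
  refine ⟨hP_prime, ?_⟩
  set Ppt : PrimeSpectrum A := ⟨Ideal.span {a1, a2}, hP_prime⟩ with hPpt
  obtain ⟨q, hq, hqlt⟩ := exists_prime_lt
  have hqpt : (⟨q, hq⟩ : PrimeSpectrum A) < Ppt :=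
    (PrimeSpectrum.asIdeal_lt_asIdeal _ _).mp hqlt
  have hle : Order.height Ppt ≤ 1 := by
    apply Order.height_le
    intro p hlast
    by_contra hlen
    push_neg at hlen
    have hlen2 : 2 ≤ p.length := by
      by_contra h2
      push_neg at h2
      interval_cases h : p.length <;> simp_all
    have hu : p.toFun ⟨p.length - 1, by omega⟩ < Ppt := by
      rw [← hlast]
      exact p.strictMono (by simp [Fin.last, Fin.mk_lt_mk]; omega)
    have hv : p.toFun ⟨p.length - 2, by omega⟩ < p.toFun ⟨p.length - 1, by omega⟩ :=
      p.strictMono (by rw [Fin.mk_lt_mk]; omega)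
    have hubot : (p.toFun ⟨p.length - 1, by omega⟩).asIdeal = ⊥ := by
      apply prime_below_eq_bot _ (p.toFun ⟨p.length - 1, by omega⟩).isPrime
      exact (PrimeSpectrum.asIdeal_lt_asIdeal _ _).mpr hu
    have hvlt : (p.toFun ⟨p.length - 2, by omega⟩).asIdeal <
        (p.toFun ⟨p.length - 1, by omega⟩).asIdeal :=
      (PrimeSpectrum.asIdeal_lt_asIdeal _ _).mpr hv
    rw [hubot] at hvlt
    exact absurd hvlt (by simp)
  have hne : Order.height Ppt ≠ 0 := by
    intro h0
    rw [Order.height_eq_zero] at h0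
    exact (h0 hqpt.le).not_gt hqpt
  exact le_antisymm hle (ENat.one_le_iff_ne_zero.mpr hne)

end
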